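/- For X on ℕ and its continuous counterpart X_c on ℂ defined by the density mixture p_{X_c}(r) = Σ_n p_X[n]·e^{-|r|²}|r|^{2n}/(n!π), the exponential generating functions satisfy H̃_X(t) = e^{-t}·φ̃_{X_c}(t), where φ̃_{X_c}(t) = Σ_m (t^m/m!)·(E|X_c|^{2m}/m!). -/

import Mathlib

/-- The `m`-th falling moment of a pmf `p` on ℕ. -/
noncomputable def fallingMoment (p : ℕ → ℝ) (m : ℕ) : ℝ :=
  ∑' n : ℕ, p n * (Nat.descFactorial n m : ℝ)

/-- The density on ℂ of the continuous counterpart `X_c = T(X)` of a pmf `p` on ℕ. -/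
noncomputable def contDensity (p : ℕ → ℝ) (r : ℂ) : ℝ :=
  ∑' n : ℕ, p n * (Real.exp (-(‖r‖ ^ 2)) * ‖r‖ ^ (2 * n) /
    ((Nat.factorial n : ℝ) * Real.pi))

/-- The `2m`-th absolute moment of the continuous counterpart. -/
noncomputable def contMoment (p : ℕ → ℝ) (m : ℕ) : ℝ :=
  ∫ r : ℂ, ‖r‖ ^ (2 * m) * contDensity p r

open MeasureTheory Real Finset

lemma gauss_moment (k : ℕ) :
    ∫ r : ℂ, ‖r‖ ^ (2 * k) * Real.exp (-(‖r‖ ^ 2))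
      = Real.pi * k.factorial := by
  have hq : (-2 : ℝ) < ((2 * k : ℕ) : ℝ) := lt_of_lt_of_le (by norm_num) (Nat.cast_nonneg _)
  have h := Complex.integral_rpow_mul_exp_neg_rpow (p := 2) (q := ((2 * k : ℕ) : ℝ)) one_le_two hq
  have h2 : ∀ x : ℂ, ‖x‖ ^ (((2 * k : ℕ)) : ℝ) * rexp (-‖x‖ ^ (2 : ℝ))
      = ‖x‖ ^ (2 * k) * rexp (-(‖x‖ ^ 2)) := by
    intro x
    rw [Real.rpow_natCast, show (2:ℝ) = ((2:ℕ):ℝ) by norm_num, Real.rpow_natCast]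
  simp_rw [h2] at h
  rw [h]
  have : (((2 * k : ℕ) : ℝ) + 2) / 2 = (k : ℝ) + 1 := by push_cast; ring
  rw [this, Real.Gamma_nat_eq_factorial]
  ring

lemma int_pow_gauss (k : ℕ) : Integrable fun x : ℝ => x ^ k * rexp (-x ^ 2) := by
  have h := integrable_rpow_mul_exp_neg_mul_sq (b := 1) one_pos (s := (k : ℝ))
    (by exact_mod_cast neg_one_lt_zero.trans_le (Nat.cast_nonneg k))
  simpa [Real.rpow_natCast] using h

lemma gauss_integrable (k : ℕ) :
    Integrable fun r : ℂ => ‖r‖ ^ (2 * k) * rexp (-(‖r‖ ^ 2)) := by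
  set g : ℝ × ℝ → ℝ := fun v => (v.1 ^ 2 + v.2 ^ 2) ^ k * rexp (-(v.1 ^ 2 + v.2 ^ 2)) with hg
  have hgint : Integrable g := by
    have : g = fun v => ∑ i ∈ range (k + 1),
        (k.choose i : ℝ) * ((v.1 ^ (2 * i) * rexp (-v.1 ^ 2)) *
          (v.2 ^ (2 * (k - i)) * rexp (-v.2 ^ 2))) := by
      funext v
      rw [hg]
      simp only [add_pow]
      rw [Finset.sum_mul]
      refine Finset.sum_congr rfl fun i hi => ?_
      rw [pow_mul, pow_mul, neg_add, Real.exp_add]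
      ring
    rw [this]
    refine integrable_finset_sum _ fun i _ => ?_
    exact (Integrable.mul_prod (int_pow_gauss (2 * i)) (int_pow_gauss (2 * (k - i)))).const_mul _
  have hcomp := (Complex.volume_preserving_equiv_real_prod.integrable_comp_emb
    Complex.measurableEquivRealProd.measurableEmbedding (g := g)).mpr hgint
  have heq : (g ∘ ⇑Complex.measurableEquivRealProd)
      = fun r : ℂ => ‖r‖ ^ (2 * k) * rexp (-(‖r‖ ^ 2)) := by
    funext z
    have habs : ‖z‖ ^ 2 = z.re ^ 2 + z.im ^ 2 := by
      rw [Complex.sq_norm, Complex.normSq_apply]; ring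
    have hz : Complex.measurableEquivRealProd z = (z.re, z.im) := rfl
    simp only [Function.comp_apply, hz, hg, ← habs, pow_mul]
  rwa [heq] at hcomp

lemma descFac_real (n m : ℕ) :
    (((n + m).descFactorial m : ℕ) : ℝ) = ∑ k ∈ range (m + 1),
      ((m.factorial : ℝ) * m.choose k / k.factorial) * (n.descFactorial k : ℝ) := by
  have hsum : ∀ k, k ∈ range (m + 1) →
      ((m.factorial : ℝ) * m.choose k / k.factorial) * (n.descFactorial k : ℝ)
        = (m.factorial : ℝ) * (n.choose k * m.choose k) := by
    intro k hk
    rw [Nat.descFactorial_eq_factorial_mul_choose]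
    push_cast
    have : (k.factorial : ℝ) ≠ 0 := by exact_mod_cast k.factorial_ne_zero
    field_simp
  rw [Finset.sum_congr rfl hsum, ← Finset.mul_sum]
  have hvdm : (n + m).choose m = ∑ k ∈ range (m + 1), n.choose k * m.choose k := by
    rw [Nat.add_choose_eq, Finset.Nat.sum_antidiagonal_eq_sum_range_succ_mk]
    refine Finset.sum_congr rfl fun k hk => ?_
    simp only []
    rw [Finset.mem_range] at hk
    congr 1
    rw [← Nat.choose_symm (by omega : k ≤ m)]
  rw [Nat.descFactorial_eq_factorial_mul_choose, hvdm]
  push_cast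
  ring

lemma B_summable (p : ℕ → ℝ)
    (hfm : ∀ m, Summable fun n : ℕ => p n * (Nat.descFactorial n m : ℝ)) (m : ℕ) :
    Summable fun n : ℕ => p n * (((n + m).descFactorial m : ℕ) : ℝ) := by
  have heq : (fun n : ℕ => p n * (((n + m).descFactorial m : ℕ) : ℝ))
      = fun n => ∑ k ∈ range (m + 1),
        ((m.factorial : ℝ) * m.choose k / k.factorial) * (p n * (n.descFactorial k : ℝ)) := by
    funext n
    rw [descFac_real, Finset.mul_sum]
    exact Finset.sum_congr rfl fun k _ => by ring
  rw [heq]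
  exact summable_sum fun k _ => (hfm k).mul_left _

lemma contMoment_eq (p : ℕ → ℝ) (hp0 : ∀ n, 0 ≤ p n)
    (hfm : ∀ m, Summable fun n : ℕ => p n * (Nat.descFactorial n m : ℝ)) (m : ℕ) :
    contMoment p m = ∑' n : ℕ, p n * (((n + m).descFactorial m : ℕ) : ℝ) := by
  set F : ℕ → ℂ → ℝ := fun n r => ‖r‖ ^ (2 * m) *
    (p n * (rexp (-(‖r‖ ^ 2)) * ‖r‖ ^ (2 * n) /
      ((n.factorial : ℝ) * Real.pi))) with hF
  have hFeq : ∀ n, F n = fun r => (p n / ((n.factorial : ℝ) * Real.pi)) •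
      (‖r‖ ^ (2 * (m + n)) * rexp (-(‖r‖ ^ 2))) := by
    intro n
    funext r
    rw [hF]
    simp only [smul_eq_mul, show 2 * (m + n) = 2 * m + 2 * n by ring, pow_add]
    ring
  have hFint : ∀ n, Integrable (F n) := by
    intro n
    rw [hFeq n]
    exact (gauss_integrable (m + n)).smul (c := p n / ((n.factorial : ℝ) * Real.pi))
  have hFval : ∀ n, (∫ r : ℂ, F n r) = p n * (((n + m).descFactorial m : ℕ) : ℝ) := by
    intro n
    rw [hFeq n, integral_smul, gauss_moment]
    have hfac : ((n.factorial : ℝ)) * (((n + m).descFactorial m : ℕ) : ℝ)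
        = ((m + n).factorial : ℝ) := by
      have := Nat.factorial_mul_descFactorial (show m ≤ n + m by omega)
      rw [show n + m - m = n by omega] at this
      rw [show m + n = n + m by omega]
      exact_mod_cast this
    have hn : ((n.factorial : ℝ)) ≠ 0 := by exact_mod_cast n.factorial_ne_zero
    have hpi : (Real.pi : ℝ) ≠ 0 := Real.pi_ne_zero
    rw [smul_eq_mul, ← hfac]
    field_simp
  have hFnonneg : ∀ n r, 0 ≤ F n r := by
    intro n r
    rw [hF]
    have := hp0 n
    positivity
  have hnorm : Summable fun n => ∫ r : ℂ, ‖F n r‖ := by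
    have : (fun n => ∫ r : ℂ, ‖F n r‖)
        = fun n => p n * (((n + m).descFactorial m : ℕ) : ℝ) := by
      funext n
      rw [← hFval n]
      congr 1
      funext r
      exact Real.norm_of_nonneg (hFnonneg n r)
    rw [this]
    exact B_summable p hfm m
  have hswap := integral_tsum_of_summable_integral_norm hFint hnorm
  have hpt : ∀ r : ℂ, (∑' n : ℕ, F n r) = ‖r‖ ^ (2 * m) * contDensity p r := by
    intro r
    rw [contDensity, ← tsum_mul_left]
  calc contMoment p m = ∫ r : ℂ, ∑' n : ℕ, F n r := by
        rw [contMoment]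
        congr 1
        funext r
        rw [hpt r]
    _ = ∑' n : ℕ, ∫ r : ℂ, F n r := hswap.symm
    _ = ∑' n : ℕ, p n * (((n + m).descFactorial m : ℕ) : ℝ) := by
        exact tsum_congr fun n => hFval n

section Cauchy

variable (t : ℝ) (n : ℕ)

lemma hx_summable : Summable fun i : ℕ => ‖t ^ i / (i.factorial : ℝ)‖ := by
  refine (Real.summable_pow_div_factorial |t|).congr fun i => ?_
  rw [norm_div, norm_pow, Real.norm_eq_abs, Real.norm_natCast]

lemma hy_summable : Summable fun j : ℕ => ‖t ^ j * (n.choose j : ℝ) / j.factorial‖ := by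
  apply summable_of_ne_finset_zero (s := range (n + 1))
  intro j hj
  rw [Finset.mem_range, not_lt] at hj
  rw [Nat.choose_eq_zero_of_lt (by omega)]
  simp

lemma cauchy_inner (mm : ℕ) :
    ∑ ij ∈ Finset.HasAntidiagonal.antidiagonal mm,
      (t ^ ij.1 / (ij.1.factorial : ℝ)) * (t ^ ij.2 * (n.choose ij.2 : ℝ) / ij.2.factorial)
    = t ^ mm * (((n + mm).choose mm : ℕ) : ℝ) / mm.factorial := by
  have hterm : ∀ ij ∈ Finset.HasAntidiagonal.antidiagonal mm,
      (t ^ ij.1 / (ij.1.factorial : ℝ)) * (t ^ ij.2 * (n.choose ij.2 : ℝ) / ij.2.factorial)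
      = t ^ mm / mm.factorial * ((mm.choose ij.1 : ℝ) * (n.choose ij.2 : ℝ)) := by
    rintro ⟨i, j⟩ hij
    rw [Finset.HasAntidiagonal.mem_antidiagonal] at hij
    simp only []
    have hchoose : ((mm.choose i : ℕ) : ℝ) * i.factorial * j.factorial = mm.factorial := by
      have h1 : i ≤ mm := by omega
      have := Nat.choose_mul_factorial_mul_factorial h1
      rw [show mm - i = j by omega] at this
      exact_mod_cast this
    have hi : ((i.factorial : ℕ) : ℝ) ≠ 0 := by exact_mod_cast i.factorial_ne_zero
    have hj2 : ((j.factorial : ℕ) : ℝ) ≠ 0 := by exact_mod_cast j.factorial_ne_zero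
    have hmm : ((mm.factorial : ℕ) : ℝ) ≠ 0 := by exact_mod_cast mm.factorial_ne_zero
    have hpow : t ^ i * t ^ j = t ^ mm := by rw [← pow_add, hij]
    field_simp
    rw [← hpow, ← hchoose]
    ring
  rw [Finset.sum_congr rfl hterm, ← Finset.mul_sum]
  have hvdm := Nat.add_choose_eq mm n mm
  rw [show n + mm = mm + n by omega, show ((mm + n).choose mm : ℝ) = ((∑ ij ∈ Finset.HasAntidiagonal.antidiagonal mm,
    mm.choose ij.1 * n.choose ij.2 : ℕ) : ℝ) from congrArg _ hvdm]
  push_cast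
  ring

lemma gseries_summable : Summable fun mm : ℕ => t ^ mm * (((n + mm).choose mm : ℕ) : ℝ) / mm.factorial := by
  have h := summable_norm_sum_mul_antidiagonal_of_summable_norm (hx_summable t) (hy_summable t n)
  refine (h.of_norm).congr fun mm => ?_
  rw [cauchy_inner]

lemma cauchy_n :
    Real.exp t * ∑' mm : ℕ, t ^ mm * (n.choose mm : ℝ) / mm.factorial
      = ∑' mm : ℕ, t ^ mm * (((n + mm).choose mm : ℕ) : ℝ) / mm.factorial := by
  have hmul := tsum_mul_tsum_eq_tsum_sum_antidiagonal_of_summable_norm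
    (hx_summable t) (hy_summable t n)
  have hexp : Real.exp t = ∑' i : ℕ, t ^ i / (i.factorial : ℝ) := by
    rw [Real.exp_eq_exp_ℝ, NormedSpace.exp_eq_tsum_div]
  rw [hexp, hmul]
  exact tsum_congr fun mm => cauchy_inner t n mm

end Cauchy

theorem egf_relation (p : ℕ → ℝ)
    (hp0 : ∀ n, 0 ≤ p n) (hp1 : ∑' n, p n = 1)
    (hfm : ∀ m, Summable fun n : ℕ => p n * (Nat.descFactorial n m : ℝ))
    (t : ℝ) (ht : t ≤ 0)
    (hH : Summable fun m : ℕ =>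
      t ^ m / (Nat.factorial m : ℝ) * (fallingMoment p m / (Nat.factorial m : ℝ)))
    (hphi : Summable fun m : ℕ =>
      t ^ m / (Nat.factorial m : ℝ) * (contMoment p m / (Nat.factorial m : ℝ))) :
    (∑' m : ℕ, t ^ m / (Nat.factorial m : ℝ) * (fallingMoment p m / (Nat.factorial m : ℝ)))
      = Real.exp (-t) *
        ∑' m : ℕ, t ^ m / (Nat.factorial m : ℝ) * (contMoment p m / (Nat.factorial m : ℝ)) := by
  classical
  -- abbreviations
  set c : ℕ → ℝ := fun m => t ^ m / ((m.factorial : ℝ) * m.factorial) with hc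
  set e : ℕ → ℝ := fun m => |t| ^ m / ((m.factorial : ℝ) * m.factorial) with he
  set dF : ℕ → ℕ → ℝ := fun n m => ((n.descFactorial m : ℕ) : ℝ) with hdF
  set B : ℕ → ℕ → ℝ := fun n m => (((n + m).descFactorial m : ℕ) : ℝ) with hB
  have hmfac : ∀ m : ℕ, ((m.factorial : ℕ) : ℝ) ≠ 0 := fun m => by
    exact_mod_cast m.factorial_ne_zero
  have habsc : ∀ m, |c m| = e m := by
    intro m
    rw [hc, he]
    simp only [abs_div, abs_pow, abs_mul, Nat.abs_cast]
  -- term conversions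
  have hdFch : ∀ n m : ℕ, dF n m = (m.factorial : ℝ) * (n.choose m : ℝ) := by
    intro n m
    rw [hdF]
    simp only [Nat.descFactorial_eq_factorial_mul_choose]
    push_cast
    ring
  have hBch : ∀ n m : ℕ, B n m = (m.factorial : ℝ) * (((n + m).choose m : ℕ) : ℝ) := by
    intro n m
    rw [hB]
    simp only [Nat.descFactorial_eq_factorial_mul_choose]
    push_cast
    ring
  have hadF : ∀ m n : ℕ, c m * (p n * dF n m) = p n * (t ^ m * (n.choose m : ℝ) / m.factorial) := by
    intro m n
    rw [hdFch, hc]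
    field_simp
  have haB : ∀ m n : ℕ, c m * (p n * B n m)
      = p n * (t ^ m * (((n + m).choose m : ℕ) : ℝ) / m.factorial) := by
    intro m n
    rw [hBch, hc]
    field_simp
  -- nonnegativity facts
  have hFnn : ∀ m, 0 ≤ fallingMoment p m :=
    fun m => tsum_nonneg fun n => mul_nonneg (hp0 n) (Nat.cast_nonneg _)
  have hCnn : ∀ m, 0 ≤ contMoment p m := by
    intro m
    rw [contMoment_eq p hp0 hfm m]
    exact tsum_nonneg fun n => mul_nonneg (hp0 n) (Nat.cast_nonneg _)
  -- generic double-sum machinery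
  have key : ∀ (M : ℕ → ℕ → ℝ),
      (∀ m n, 0 ≤ M n m) →
      (∀ m, Summable fun n => p n * M n m) →
      (∀ n, Summable fun m => c m * (p n * M n m)) →
      (Summable fun m : ℕ => e m * ∑' n, p n * M n m) →
      ∑' m : ℕ, c m * ∑' n : ℕ, p n * M n m
        = ∑' n : ℕ, ∑' m : ℕ, c m * (p n * M n m) := by
    intro M hMnn hrow hcol habs
    set a : ℕ → ℕ → ℝ := fun m n => c m * (p n * M n m) with ha
    have hann : ∀ m n, |a m n| = e m * (p n * M n m) := by
      intro m n
      rw [ha]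
      simp only []
      rw [abs_mul, habsc, abs_of_nonneg (mul_nonneg (hp0 n) (hMnn m n))]
    have habs2 : Summable fun q : ℕ × ℕ => |a q.1 q.2| := by
      refine (summable_prod_of_nonneg fun q => abs_nonneg _).mpr ⟨fun m => ?_, ?_⟩
      · simp only [hann]
        exact (hrow m).mul_left _
      · refine habs.congr fun m => ?_
        simp only [hann]
        rw [tsum_mul_left]
    have hA : Summable (Function.uncurry a) := by
      rw [← summable_abs_iff]
      exact habs2
    have hswap := Summable.tsum_comm' hA (fun m => by
        rw [← summable_abs_iff]
        refine ((hrow m).mul_left (e m)).congr fun n => (hann m n).symm)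
      (fun n => hcol n)
    calc ∑' m : ℕ, c m * ∑' n : ℕ, p n * M n m
        = ∑' m : ℕ, ∑' n : ℕ, a m n := by
          refine tsum_congr fun m => ?_
          rw [ha]
          simp only []
          rw [tsum_mul_left]
      _ = ∑' n : ℕ, ∑' m : ℕ, a m n := hswap.symm
      _ = ∑' n : ℕ, ∑' m : ℕ, c m * (p n * M n m) := rfl
  -- the falling-moment side
  have hLterm : ∀ m : ℕ, t ^ m / (m.factorial : ℝ) * (fallingMoment p m / m.factorial)
      = c m * ∑' n, p n * dF n m := by
    intro m
    rw [fallingMoment, hc]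
    simp only [hdF]
    ring
  have hRterm : ∀ m : ℕ, t ^ m / (m.factorial : ℝ) * (contMoment p m / m.factorial)
      = c m * ∑' n, p n * B n m := by
    intro m
    rw [contMoment_eq p hp0 hfm m, hc]
    simp only [hB]
    ring
  have habse : ∀ (G : ℕ → ℝ), (∀ m, 0 ≤ G m) →
      (Summable fun m : ℕ => t ^ m / (m.factorial : ℝ) * (G m / m.factorial)) →
      Summable fun m : ℕ => e m * G m := by
    intro G hG hS
    refine (summable_abs_iff.mpr hS).congr fun m => ?_
    rw [abs_mul, abs_div, abs_div, abs_pow, Nat.abs_cast, abs_of_nonneg (hG m), he]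
    simp only []
    ring
  have hcolL : ∀ n, Summable fun m => c m * (p n * dF n m) := by
    intro n
    apply summable_of_ne_finset_zero (s := range (n + 1))
    intro m hm
    rw [Finset.mem_range, not_lt] at hm
    rcases Nat.lt_or_ge n m with h | h
    · have : n.descFactorial m = 0 := Nat.descFactorial_eq_zero_iff_lt.mpr h
      rw [hdF]
      simp [this]
    · omega
  have hcolR : ∀ n, Summable fun m => c m * (p n * B n m) := by
    intro n
    refine ((gseries_summable t n).mul_left (p n)).congr fun m => ?_
    rw [haB]
  have hkeyL := key dF (fun m n => Nat.cast_nonneg _) (fun m => hfm m) hcolL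
    (by
      refine habse (fun m => fallingMoment p m) hFnn hH |>.congr fun m => ?_
      rw [fallingMoment])
  have hkeyR := key B (fun m n => Nat.cast_nonneg _) (fun m => B_summable p hfm m) hcolR
    (by
      refine habse (fun m => contMoment p m) hCnn hphi |>.congr fun m => ?_
      rw [contMoment_eq p hp0 hfm m])
  -- inner sums via Cauchy product
  have hinnerL : ∀ n : ℕ, ∑' m : ℕ, c m * (p n * dF n m)
      = p n * ∑' m : ℕ, t ^ m * (n.choose m : ℝ) / m.factorial := by
    intro n
    rw [← tsum_mul_left]
    exact tsum_congr fun m => hadF m n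
  have hinnerR : ∀ n : ℕ, ∑' m : ℕ, c m * (p n * B n m)
      = p n * ∑' m : ℕ, t ^ m * (((n + m).choose m : ℕ) : ℝ) / m.factorial := by
    intro n
    rw [← tsum_mul_left]
    exact tsum_congr fun m => haB m n
  -- put everything together
  have hexp : Real.exp (-t) * Real.exp t = 1 := by
    rw [← Real.exp_add]
    simp
  calc (∑' m : ℕ, t ^ m / (Nat.factorial m : ℝ) * (fallingMoment p m / (Nat.factorial m : ℝ)))
      = ∑' m : ℕ, c m * ∑' n, p n * dF n m := tsum_congr hLterm
    _ = ∑' n : ℕ, ∑' m : ℕ, c m * (p n * dF n m) := hkeyL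
    _ = ∑' n : ℕ, p n * ∑' m : ℕ, t ^ m * (n.choose m : ℝ) / m.factorial :=
        tsum_congr hinnerL
    _ = ∑' n : ℕ, Real.exp (-t) *
          (p n * ∑' m : ℕ, t ^ m * (((n + m).choose m : ℕ) : ℝ) / m.factorial) := by
        refine tsum_congr fun n => ?_
        rw [← cauchy_n t n]
        rw [← mul_assoc, mul_comm (Real.exp (-t)) (p n), mul_assoc, ← mul_assoc (Real.exp (-t)),
          hexp, one_mul]
    _ = Real.exp (-t) * ∑' n : ℕ, p n *
          ∑' m : ℕ, t ^ m * (((n + m).choose m : ℕ) : ℝ) / m.factorial := tsum_mul_left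
    _ = Real.exp (-t) * ∑' n : ℕ, ∑' m : ℕ, c m * (p n * B n m) := by
        rw [tsum_congr hinnerR]
    _ = Real.exp (-t) * ∑' m : ℕ, c m * ∑' n, p n * B n m := by rw [hkeyR]
    _ = Real.exp (-t) *
        ∑' m : ℕ, t ^ m / (Nat.factorial m : ℝ) * (contMoment p m / (Nat.factorial m : ℝ)) := by
        rw [tsum_congr hRterm]
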